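/- Let N be a binary phylogenetic network and (i,j) a cherry of N. Then for every node u of N other than i and the common parent p of i and j, u is a node of the reduced network N^{(i,j)}, and the extended μ-vector of u in N^{(i,j)} satisfies: μ^{N^{(i,j)}}_k(u) = μ^N_k(u) for all k ≠ i, and μ^{N^{(i,j)}}_i(u) = 0. Hence 𝛍(N^{(i,j)}) = 𝛍(N)^{(i,j)}. -/

import Mathlib

open Relation

/-- A (candidate) binary phylogenetic network: a finite directed graph with
leaf labels in a taxon set `X ⊆ [n] = {1,…,n}`. Well-formedness is `Valid`. -/
structure BPN (n : ℕ) where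
  V : Type
  [instFin : Fintype V]
  [instDec : DecidableEq V]
  arc : V → V → Prop
  X : Finset ℕ
  label : V → ℕ

namespace BPN

attribute [instance] BPN.instFin BPN.instDec

variable {n : ℕ}

noncomputable def indeg (N : BPN n) (u : N.V) : ℕ := Nat.card {v : N.V // N.arc v u}
noncomputable def outdeg (N : BPN n) (u : N.V) : ℕ := Nat.card {v : N.V // N.arc u v}

def isRoot (N : BPN n) (u : N.V) : Prop := N.indeg u = 0 ∧ N.outdeg u = 1
def isLeaf (N : BPN n) (u : N.V) : Prop := N.indeg u = 1 ∧ N.outdeg u = 0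
def isTree (N : BPN n) (u : N.V) : Prop := N.indeg u = 1 ∧ N.outdeg u = 2
def isRetic (N : BPN n) (u : N.V) : Prop := N.indeg u = 2 ∧ N.outdeg u = 1
/-- leaves together with tree nodes -/
def isVT (N : BPN n) (u : N.V) : Prop := N.isLeaf u ∨ N.isTree u

/-- Well-formedness of a binary phylogenetic network on `X ⊆ [n]`:
acyclic, every node is a root/leaf/tree node/reticulation, unique root,
and the leaves are bijectively labeled by `X`. -/
def Valid (N : BPN n) : Prop :=
  (∀ u v : N.V, ReflTransGen N.arc u v → ReflTransGen N.arc v u → u = v) ∧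
  (∀ u : N.V, N.isRoot u ∨ N.isLeaf u ∨ N.isTree u ∨ N.isRetic u) ∧
  (∃! r : N.V, N.isRoot r) ∧
  (∀ u : N.V, N.isLeaf u → N.label u ∈ N.X ∧ 1 ≤ N.label u ∧ N.label u ≤ n) ∧
  (∀ u v : N.V, N.isLeaf u → N.isLeaf v → N.label u = N.label v → u = v) ∧
  (∀ i ∈ N.X, ∃ u : N.V, N.isLeaf u ∧ N.label u = i)

/-- `IsPath N u v l` : `l` is the list of nodes visited (after `u`) by a
directed path from `u` to `v`; the trivial path is `[]`. -/
inductive IsPath (N : BPN n) : N.V → N.V → List N.V → Prop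
  | nil (u : N.V) : IsPath N u u []
  | cons {u v w : N.V} {l : List N.V} : N.arc u v → IsPath N v w l → IsPath N u w (v :: l)

/-- the number `m(u,v)` of directed paths from `u` to `v` -/
noncomputable def m (N : BPN n) (u v : N.V) : ℕ := Nat.card {l : List N.V // N.IsPath u v l}

open Classical in
/-- the extended μ-vector: position `0` counts paths to reticulations,
position `k ≥ 1` counts paths to the leaf labeled `k`. -/
noncomputable def mu (N : BPN n) (u : N.V) : Fin (n + 1) → ℕ := fun k =>
  if k = 0 then ∑ h ∈ Finset.univ.filter (fun h => N.isRetic h), N.m u h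
  else ∑ v ∈ Finset.univ.filter (fun v => N.isLeaf v ∧ N.label v = (k : ℕ)), N.m u v

/-- `delta S` is the 0/1 vector with `1` exactly in the positions of `S`. -/
def delta (S : Finset (Fin (n + 1))) : Fin (n + 1) → ℕ := fun k => if k ∈ S then 1 else 0

open Classical in
/-- the extended μ-representation: the multiset of μ-vectors of leaves and tree nodes -/
noncomputable def muRep (N : BPN n) : Multiset (Fin (n + 1) → ℕ) :=
  (Finset.univ.filter (fun u => N.isVT u)).val.map N.mu

/-- `(i,j)` is a cherry realized by the leaves `xi, xj` with common parent `p`. -/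
def IsCherry (N : BPN n) (i j : Fin (n + 1)) (xi xj p : N.V) : Prop :=
  N.isLeaf xi ∧ N.label xi = (i : ℕ) ∧ N.isLeaf xj ∧ N.label xj = (j : ℕ) ∧
  xi ≠ xj ∧ N.arc p xi ∧ N.arc p xj

/-- `(i,j)` is a reticulated-cherry: the parent `p` of leaf `xi` is a reticulation,
the parent `q` of leaf `xj` is a tree node, and there is an arc from `q` to `p`. -/
def IsRetCherry (N : BPN n) (i j : Fin (n + 1)) (xi xj p q : N.V) : Prop :=
  N.isLeaf xi ∧ N.label xi = (i : ℕ) ∧ N.isLeaf xj ∧ N.label xj = (j : ℕ) ∧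
  xi ≠ xj ∧ N.arc p xi ∧ N.arc q xj ∧ N.isRetic p ∧ N.isTree q ∧ N.arc q p

/-- Cherry reduction: remove leaf `xi` and suppress the elementary node `p`
(connecting the parent of `p` directly to `xj`). -/
def cherryReduce (N : BPN n) (xi xj p : N.V) : BPN n where
  V := {v : N.V // v ≠ xi ∧ v ≠ p}
  arc u v := N.arc u.1 v.1 ∨ (N.arc u.1 p ∧ v.1 = xj)
  X := N.X.erase (N.label xi)
  label v := N.label v.1

/-- Reticulated-cherry reduction: delete the arc `q → p` and suppress the
elementary nodes `p` (connecting its other parent to `xi`) and `q`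
(connecting its parent to `xj`). -/
def retCherryReduce (N : BPN n) (xi xj p q : N.V) : BPN n where
  V := {v : N.V // v ≠ p ∧ v ≠ q}
  arc u v := N.arc u.1 v.1 ∨ (N.arc u.1 p ∧ v.1 = xi) ∨ (N.arc u.1 q ∧ v.1 = xj)
  X := N.X
  label v := N.label v.1

/-- Isomorphism of labeled networks: digraph isomorphism preserving leaf labels. -/
def Iso (N M : BPN n) : Prop :=
  ∃ f : N.V ≃ M.V, (∀ u v : N.V, N.arc u v ↔ M.arc (f u) (f v)) ∧
    ∀ u : N.V, N.isLeaf u → M.label (f u) = N.label u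

/-- `N` reduces in one step by the pair `s` to (an isomorphic copy of) `M`. -/
def ReducesTo (N : BPN n) (s : Fin (n + 1) × Fin (n + 1)) (M : BPN n) : Prop :=
  (∃ xi xj p, N.IsCherry s.1 s.2 xi xj p ∧ Iso (N.cherryReduce xi xj p) M) ∨
  (∃ xi xj p q, N.IsRetCherry s.1 s.2 xi xj p q ∧ Iso (N.retCherryReduce xi xj p q) M)

/-- `ReducesSeq N S M` : the sequence of pairs `S` is reducible in `N` and reduces it to `M`. -/
inductive ReducesSeq : BPN n → List (Fin (n + 1) × Fin (n + 1)) → BPN n → Prop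
  | nil (N : BPN n) : ReducesSeq N [] N
  | cons {N M P : BPN n} {s S} : ReducesTo N s M → ReducesSeq M S P → ReducesSeq N (s :: S) P

/-- the trivial network `I_i`: a root and a single leaf labeled `i` -/
def IsTrivial (N : BPN n) (i : Fin (n + 1)) : Prop :=
  ∃ r u : N.V, r ≠ u ∧ N.arc r u ∧ N.isLeaf u ∧ N.label u = (i : ℕ) ∧ ∀ v : N.V, v = r ∨ v = u

/-- orchard networks: valid networks admitting a complete reduction sequence -/
def IsOrchard (N : BPN n) : Prop :=
  N.Valid ∧ ∃ S M i, ReducesSeq N S M ∧ IsTrivial M i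

/-- cherry-reduction of a multiset of vectors -/
def cherryRed (i j : Fin (n + 1)) (M : Multiset (Fin (n + 1) → ℕ)) :
    Multiset (Fin (n + 1) → ℕ) :=
  ((M.erase (delta {i})).erase (delta {i, j})).map fun μ k => if k = i then 0 else μ k

/-- reticulated-cherry-reduction of a multiset of vectors -/
def retCherryRed (i j : Fin (n + 1)) (M : Multiset (Fin (n + 1) → ℕ)) :
    Multiset (Fin (n + 1) → ℕ) :=
  (M.erase (delta {0, i, j})).map fun μ k =>
    if k = 0 then μ 0 - μ i else if k = i then μ i - μ j else μ k

/-- `(i,j)` is a cherry of a multiset of vectors -/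
def IsCherryM (i j : Fin (n + 1)) (M : Multiset (Fin (n + 1) → ℕ)) : Prop :=
  M.count (delta {i, j}) = 1 ∧ ∀ μ ∈ M, μ ≠ delta {i} → μ ≠ delta {j} → μ i = μ j

/-- `(i,j)` is a reticulated-cherry of a multiset of vectors -/
def IsRetCherryM (i j : Fin (n + 1)) (M : Multiset (Fin (n + 1) → ℕ)) : Prop :=
  M.count (delta {0, i, j}) = 1 ∧
    ∀ μ ∈ M, μ ≠ delta {i} → μ ≠ delta {j} → μ j ≤ μ i ∧ μ i ≤ μ 0

/-- one reduction step on multisets of vectors -/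
inductive MStep :
    Multiset (Fin (n + 1) → ℕ) → Fin (n + 1) × Fin (n + 1) → Multiset (Fin (n + 1) → ℕ) → Prop
  | cherry {M : Multiset (Fin (n + 1) → ℕ)} {i j} :
      IsCherryM i j M → MStep M (i, j) (cherryRed i j M)
  | ret {M : Multiset (Fin (n + 1) → ℕ)} {i j} :
      IsRetCherryM i j M → MStep M (i, j) (retCherryRed i j M)

/-- reduction of a multiset of vectors by a sequence of pairs -/
inductive MSeq :
    Multiset (Fin (n + 1) → ℕ) → List (Fin (n + 1) × Fin (n + 1)) → Multiset (Fin (n + 1) → ℕ) → Prop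
  | nil (M : Multiset (Fin (n + 1) → ℕ)) : MSeq M [] M
  | cons {M M' M'' : Multiset (Fin (n + 1) → ℕ)} {s S} :
      MStep M s M' → MSeq M' S M'' → MSeq M (s :: S) M''

open Classical in
/-- the μ-distance: cardinality of the symmetric difference of the μ-representations -/
noncomputable def dmu (N M : BPN n) : ℕ :=
  (symmDiff N.muRep.toFinset M.muRep.toFinset).card

end BPN

namespace BPN


section Aux

variable {n : ℕ} {N : BPN n}

lemma leaf_no_out {u : N.V} (h : N.isLeaf u) (v : N.V) : ¬N.arc u v := by
  intro hv
  haveI : Nonempty {w : N.V // N.arc u w} := ⟨⟨v, hv⟩⟩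
  have h1 : 0 < Nat.card {w : N.V // N.arc u w} := Nat.card_pos
  have h2 := h.2
  unfold outdeg at h2
  omega

lemma parent_eq {v a b : N.V} (h1 : N.indeg v = 1) (ha : N.arc a v) (hb : N.arc b v) :
    a = b := by
  unfold indeg at h1
  have hs := (Nat.card_eq_one_iff_unique.mp h1).1
  exact congrArg Subtype.val (hs.allEq ⟨a, ha⟩ ⟨b, hb⟩)

lemma two_le_outdeg {a b q : N.V} (ha : N.arc q a) (hb : N.arc q b) (hab : a ≠ b) :
    2 ≤ N.outdeg q := by
  have hinj : Function.Injective
      (fun t : Fin 2 => (if t = 0 then ⟨a, ha⟩ else ⟨b, hb⟩ : {x : N.V // N.arc q x})) := by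
    intro s t hst
    fin_cases s <;> fin_cases t <;> simp_all [Subtype.ext_iff] <;> exact hab hst.symm
  have := Nat.card_le_card_of_injective _ hinj
  unfold outdeg
  simpa [Nat.card_eq_fintype_card] using this

lemma child_of {a b w q : N.V} (hq : N.outdeg q = 2) (ha : N.arc q a) (hb : N.arc q b)
    (hab : a ≠ b) (hw : N.arc q w) : w = a ∨ w = b := by
  by_contra hc
  push_neg at hc
  have hinj : Function.Injective (fun t : Fin 3 =>
      (if t = 0 then ⟨a, ha⟩ else if t = 1 then ⟨b, hb⟩ else ⟨w, hw⟩ : {x : N.V // N.arc q x})) := by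
    intro s t hst
    fin_cases s <;> fin_cases t <;> simp_all [Subtype.ext_iff] <;>
      first
      | exact hab hst
      | exact hab hst.symm
      | exact hc.1 hst.symm
      | exact hc.2 hst.symm
      | exact hc.1 hst
      | exact hc.2 hst
  have := Nat.card_le_card_of_injective _ hinj
  unfold outdeg at hq
  simp [Nat.card_eq_fintype_card] at this
  omega

/-- bundled context facts about a cherry -/
structure CCtx (N : BPN n) (xi xj p : N.V) : Prop where
  lxi : N.isLeaf xi
  lxj : N.isLeaf xj
  nexixj : xi ≠ xj
  axi : N.arc p xi
  axj : N.arc p xj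
  tp : N.isTree p
  nexip : xi ≠ p
  nexjp : xj ≠ p

variable {xi xj p : N.V}

lemma CCtx.child (c : CCtx N xi xj p) {w : N.V} (hw : N.arc p w) : w = xi ∨ w = xj :=
  child_of c.tp.2 c.axi c.axj c.nexixj hw

lemma CCtx.parxi (c : CCtx N xi xj p) {w : N.V} (hw : N.arc w xi) : w = p :=
  parent_eq c.lxi.1 hw c.axi

lemma CCtx.parxj (c : CCtx N xi xj p) {w : N.V} (hw : N.arc w xj) : w = p :=
  parent_eq c.lxj.1 hw c.axj

lemma CCtx.no_pp (c : CCtx N xi xj p) : ¬N.arc p p := fun hw =>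
  (c.child hw).elim (fun h => c.nexip h.symm) (fun h => c.nexjp h.symm)

lemma cherry_ctx (hN : N.Valid) {i j : Fin (n + 1)} (h : N.IsCherry i j xi xj p) :
    CCtx N xi xj p := by
  obtain ⟨lxi, hlxi, lxj, hlxj, hne, axi, axj⟩ := h
  have nexip : xi ≠ p := by
    intro he; subst he; exact leaf_no_out lxi _ axi
  have nexjp : xj ≠ p := by
    intro he; subst he; exact leaf_no_out lxj _ axj
  have h2 := two_le_outdeg axi axj hne
  have tp : N.isTree p := by
    rcases hN.2.1 p with hr | hr | hr | hr
    · have := hr.2; omega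
    · have := hr.2; omega
    · exact hr
    · have := hr.2; omega
  exact ⟨lxi, lxj, hne, axi, axj, tp, nexip, nexjp⟩

lemma outdeg_red (c : CCtx N xi xj p) (v : (N.cherryReduce xi xj p).V) :
    (N.cherryReduce xi xj p).outdeg v = N.outdeg v.1 := by
  have hvxj : ¬N.arc v.1 xj := fun h' => absurd (c.parxj h') v.2.2
  have hvxi : ¬N.arc v.1 xi := fun h' => absurd (c.parxi h') v.2.2
  unfold outdeg
  refine Nat.card_congr (Equiv.ofBijective
    (fun w => if hw : w.1.1 = xj then ⟨p, ?_⟩ else ⟨w.1.1, ?_⟩) ⟨?_, ?_⟩)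
  · rcases w.2 with h' | h'
    · rw [hw] at h'; exact absurd h' hvxj
    · exact h'.1
  · rcases w.2 with h' | h'
    · exact h'
    · exact absurd h'.2 hw
  · intro w1 w2 he
    by_cases h1 : w1.1.1 = xj <;> by_cases h2 : w2.1.1 = xj <;>
        simp only [dif_pos, dif_neg, h1, h2, not_false_iff, Subtype.ext_iff] at he <;>
        [skip; skip; skip; skip]
    · exact Subtype.ext (Subtype.ext (h1.trans h2.symm))
    · exact absurd he.symm w2.1.2.2
    · exact absurd he w1.1.2.2
    · exact Subtype.ext (Subtype.ext he)
  · intro w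
    by_cases hw : w.1 = p
    · have harcp : N.arc v.1 p := by have h2 := w.2; rw [hw] at h2; exact h2
      refine ⟨⟨⟨xj, Ne.symm c.nexixj, c.nexjp⟩, Or.inr ⟨harcp, rfl⟩⟩, ?_⟩
      simp only [dif_pos]
      exact Subtype.ext hw.symm
    · have hxj : w.1 ≠ xj := fun he => hvxj (by have h2 := w.2; rw [he] at h2; exact h2)
      have hxi : w.1 ≠ xi := fun he => hvxi (by have h2 := w.2; rw [he] at h2; exact h2)
      refine ⟨⟨⟨w.1, hxi, hw⟩, Or.inl w.2⟩, ?_⟩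
      simp only [dif_neg hxj]

lemma indeg_red (c : CCtx N xi xj p) (v : (N.cherryReduce xi xj p).V) :
    (N.cherryReduce xi xj p).indeg v = N.indeg v.1 := by
  by_cases hv : v.1 = xj
  · have h1 : (N.cherryReduce xi xj p).indeg v = N.indeg p := by
      unfold indeg
      refine Nat.card_congr (Equiv.ofBijective (fun u => ⟨u.1.1, ?_⟩) ⟨?_, ?_⟩)
      · rcases u.2 with h' | h'
        · rw [hv] at h'; exact absurd (c.parxj h') u.1.2.2
        · exact h'.1
      · intro u1 u2 he
        obtain ⟨⟨a1, h11⟩, h12⟩ := u1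
        obtain ⟨⟨a2, h21⟩, h22⟩ := u2
        have h' : a1 = a2 := congrArg Subtype.val he
        subst h'
        rfl
      · intro u
        have hxi : u.1 ≠ xi := fun he => leaf_no_out c.lxi p (by have h2 := u.2; rw [he] at h2; exact h2)
        have hp : u.1 ≠ p := fun he => c.no_pp (by have h2 := u.2; rw [he] at h2; exact h2)
        exact ⟨⟨⟨u.1, hxi, hp⟩, Or.inr ⟨u.2, hv⟩⟩, rfl⟩
    rw [h1, hv, c.tp.1, c.lxj.1]
  · unfold indeg
    refine Nat.card_congr (Equiv.ofBijective (fun u => ⟨u.1.1, ?_⟩) ⟨?_, ?_⟩)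
    · rcases u.2 with h' | h'
      · exact h'
      · exact absurd h'.2 hv
    · intro u1 u2 he
      obtain ⟨⟨a1, h11⟩, h12⟩ := u1
      obtain ⟨⟨a2, h21⟩, h22⟩ := u2
      have h' : a1 = a2 := congrArg Subtype.val he
      subst h'
      rfl
    · intro u
      have hxi : u.1 ≠ xi := fun he =>
        leaf_no_out c.lxi v.1 (by have h2 := u.2; rw [he] at h2; exact h2)
      have hp : u.1 ≠ p := by
        intro he
        have harc : N.arc p v.1 := by have h2 := u.2; rw [he] at h2; exact h2
        rcases c.child harc with h' | h'
        · exact v.2.1 h'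
        · exact hv h'
      exact ⟨⟨⟨u.1, hxi, hp⟩, Or.inl u.2⟩, rfl⟩

lemma isLeaf_red (c : CCtx N xi xj p) (v : (N.cherryReduce xi xj p).V) :
    (N.cherryReduce xi xj p).isLeaf v ↔ N.isLeaf v.1 := by
  unfold isLeaf; rw [indeg_red c v, outdeg_red c v]

lemma isTree_red (c : CCtx N xi xj p) (v : (N.cherryReduce xi xj p).V) :
    (N.cherryReduce xi xj p).isTree v ↔ N.isTree v.1 := by
  unfold isTree; rw [indeg_red c v, outdeg_red c v]

lemma isRetic_red (c : CCtx N xi xj p) (v : (N.cherryReduce xi xj p).V) :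
    (N.cherryReduce xi xj p).isRetic v ↔ N.isRetic v.1 := by
  unfold isRetic; rw [indeg_red c v, outdeg_red c v]

lemma isVT_red (c : CCtx N xi xj p) (v : (N.cherryReduce xi xj p).V) :
    (N.cherryReduce xi xj p).isVT v ↔ N.isVT v.1 := by
  unfold isVT; rw [isLeaf_red c v, isTree_red c v]

/-- expand shortcut arcs: insert `p` before every `xj` -/
def expandP {α : Type} [DecidableEq α] (xj p : α) : List α → List α
  | [] => []
  | a :: t => if a = xj then p :: xj :: expandP xj p t else a :: expandP xj p t

/-- contract: drop `xi` and `p`, keep the rest as subtype elements -/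
def toSub {α : Type} [DecidableEq α] (xi p : α) : List α → List {v : α // v ≠ xi ∧ v ≠ p}
  | [] => []
  | a :: t => if h : a ≠ xi ∧ a ≠ p then ⟨a, h⟩ :: toSub xi p t else toSub xi p t

lemma toSub_expandP {α : Type} [DecidableEq α] {xi xj p : α} (hji : xj ≠ xi) (hjp : xj ≠ p)
    (l : List {v : α // v ≠ xi ∧ v ≠ p}) :
    toSub xi p (expandP xj p (l.map Subtype.val)) = l := by
  induction l with
  | nil => rfl
  | cons a t ih =>
    obtain ⟨av, h1, h2⟩ := a
    rw [List.map_cons]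
    by_cases ha : av = xj
    · subst ha
      have e1 : expandP av p (av :: List.map Subtype.val t)
          = p :: av :: expandP av p (List.map Subtype.val t) := by
        simp [expandP]
      have e2 : toSub xi p (p :: av :: expandP av p (List.map Subtype.val t))
          = ⟨av, h1, h2⟩ :: toSub xi p (expandP av p (List.map Subtype.val t)) := by
        simp [toSub, h1, h2]
      rw [e1, e2, ih]
    · have e1 : expandP xj p (av :: List.map Subtype.val t)
          = av :: expandP xj p (List.map Subtype.val t) := by
        simp [expandP, ha]
      have e2 : toSub xi p (av :: expandP xj p (List.map Subtype.val t))
          = ⟨av, h1, h2⟩ :: toSub xi p (expandP xj p (List.map Subtype.val t)) := by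
        simp [toSub, h1, h2]
      rw [e1, e2, ih]

lemma leaf_path {u v : N.V} {l : List N.V} (hu : N.isLeaf u) (hl : N.IsPath u v l) :
    v = u ∧ l = [] := by
  cases hl with
  | nil => exact ⟨rfl, rfl⟩
  | cons harc _ => exact absurd harc (leaf_no_out hu _)

lemma path_up (c : CCtx N xi xj p) {u v : (N.cherryReduce xi xj p).V}
    {l : List (N.cherryReduce xi xj p).V} (hl : (N.cherryReduce xi xj p).IsPath u v l) :
    N.IsPath u.1 v.1 (expandP xj p (l.map Subtype.val)) := by
  induction hl with
  | nil u => exact IsPath.nil u.1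
  | cons harc hp ih =>
    rename_i a b w l'
    by_cases hb : b.1 = xj
    · have hap : N.arc a.1 p := by
        rcases harc with h' | h'
        · rw [hb] at h'; exact absurd (c.parxj h') a.2.2
        · exact h'.1
      have he : expandP xj p ((b :: l').map Subtype.val)
          = p :: xj :: expandP xj p (l'.map Subtype.val) := by
        show expandP xj p (b.1 :: l'.map Subtype.val) = _
        simp [expandP, hb]
      rw [he]
      exact IsPath.cons hap (IsPath.cons c.axj (hb ▸ ih))
    · have hab : N.arc a.1 b.1 := by
        rcases harc with h' | h'
        · exact h'
        · exact absurd h'.2 hb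
      have he : expandP xj p ((b :: l').map Subtype.val)
          = b.1 :: expandP xj p (l'.map Subtype.val) := by
        show expandP xj p (b.1 :: l'.map Subtype.val) = _
        simp [expandP, hb]
      rw [he]
      exact IsPath.cons hab ih

lemma path_down (c : CCtx N xi xj p) {a b : N.V} {l : List N.V} (hl : N.IsPath a b l) :
    ∀ (ha : a ≠ xi ∧ a ≠ p) (hb : b ≠ xi ∧ b ≠ p),
      (N.cherryReduce xi xj p).IsPath ⟨a, ha⟩ ⟨b, hb⟩ (toSub xi p l) := by
  induction hl with
  | nil u => exact fun ha hb => IsPath.nil _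
  | cons harc hp ih =>
    rename_i u w b' l'
    intro ha hb
    by_cases hw1 : w = xi
    · subst hw1
      obtain ⟨hbv, -⟩ := leaf_path c.lxi hp
      exact absurd hbv hb.1
    · by_cases hw2 : w = p
      · rw [hw2] at harc hp ⊢
        cases hp with
        | nil => exact absurd rfl hb.2
        | cons harc2 hp2 =>
          rename_i y l2
          rcases c.child harc2 with hy | hy
          · rw [hy] at hp2
            obtain ⟨hbv, -⟩ := leaf_path c.lxi hp2
            exact absurd hbv hb.1
          · rw [hy] at hp2 ⊢
            obtain ⟨hbv, hl2⟩ := leaf_path c.lxj hp2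
            rw [hl2]
            have hbe : (⟨_, hb⟩ : (N.cherryReduce xi xj p).V)
                = ⟨xj, Ne.symm c.nexixj, c.nexjp⟩ := Subtype.ext hbv
            rw [hbe]
            have ht : toSub xi p (p :: xj :: ([] : List N.V))
                = [⟨xj, Ne.symm c.nexixj, c.nexjp⟩] := by
              simp [toSub, c.nexjp, Ne.symm c.nexixj]
            rw [ht]
            exact IsPath.cons (Or.inr ⟨harc, rfl⟩) (IsPath.nil _)
      · have ht : toSub xi p (w :: l') = ⟨w, hw1, hw2⟩ :: toSub xi p l' := by
          simp [toSub, hw1, hw2]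
        rw [ht]
        exact IsPath.cons (Or.inl harc) (ih ⟨hw1, hw2⟩ hb)

lemma expandP_toSub (c : CCtx N xi xj p) {a b : N.V} {l : List N.V} (hl : N.IsPath a b l) :
    ∀ (_ : a ≠ xi ∧ a ≠ p) (_ : b ≠ xi ∧ b ≠ p),
      expandP xj p ((toSub xi p l).map Subtype.val) = l := by
  induction hl with
  | nil u => exact fun _ _ => rfl
  | cons harc hp ih =>
    rename_i u w b' l'
    intro ha hb
    by_cases hw1 : w = xi
    · subst hw1
      obtain ⟨hbv, -⟩ := leaf_path c.lxi hp
      exact absurd hbv hb.1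
    · by_cases hw2 : w = p
      · rw [hw2] at harc hp ⊢
        cases hp with
        | nil => exact absurd rfl hb.2
        | cons harc2 hp2 =>
          rename_i y l2
          rcases c.child harc2 with hy | hy
          · rw [hy] at hp2
            obtain ⟨hbv, -⟩ := leaf_path c.lxi hp2
            exact absurd hbv hb.1
          · rw [hy] at hp2 ⊢
            obtain ⟨hbv, hl2⟩ := leaf_path c.lxj hp2
            rw [hl2]
            simp [toSub, expandP, c.nexjp, Ne.symm c.nexixj]
      · have hwj : w ≠ xj := by
          intro he; subst he; exact ha.2 (c.parxj harc)
        have ht : toSub xi p (w :: l') = ⟨w, hw1, hw2⟩ :: toSub xi p l' := by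
          simp [toSub, hw1, hw2]
        rw [ht, List.map_cons]
        have he : expandP xj p (w :: (toSub xi p l').map Subtype.val)
            = w :: expandP xj p ((toSub xi p l').map Subtype.val) := by
          simp [expandP, hwj]
        rw [he, ih ⟨hw1, hw2⟩ hb]

lemma m_red (c : CCtx N xi xj p) (u v : (N.cherryReduce xi xj p).V) :
    (N.cherryReduce xi xj p).m u v = N.m u.1 v.1 := by
  unfold m
  exact Nat.card_congr
    ⟨fun l => ⟨expandP xj p (l.1.map Subtype.val), path_up c l.2⟩,
     fun l => ⟨toSub xi p l.1, path_down c l.2 u.2 v.2⟩,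
     fun l => Subtype.ext (toSub_expandP (Ne.symm c.nexixj) c.nexjp l.1),
     fun l => Subtype.ext (expandP_toSub c l.2 u.2 v.2)⟩

lemma m_leaf_self {u : N.V} (hu : N.isLeaf u) : N.m u u = 1 := by
  unfold m
  rw [Nat.card_eq_one_iff_unique]
  refine ⟨⟨fun l1 l2 => ?_⟩, ⟨[], IsPath.nil u⟩⟩
  have key : ∀ l, N.IsPath u u l → l = [] := fun l hl => (leaf_path hu hl).2
  exact Subtype.ext ((key _ l1.2).trans (key _ l2.2).symm)

lemma m_leaf_ne {u v : N.V} (hu : N.isLeaf u) (huv : v ≠ u) : N.m u v = 0 := by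
  unfold m
  rw [Nat.card_eq_zero]
  left
  exact ⟨fun l => huv (leaf_path hu l.2).1⟩

lemma path_from_p (c : CCtx N xi xj p) {v : N.V} {l : List N.V} (hl : N.IsPath p v l) :
    (v = p ∧ l = []) ∨ (v = xi ∧ l = [xi]) ∨ (v = xj ∧ l = [xj]) := by
  cases hl with
  | nil => exact Or.inl ⟨rfl, rfl⟩
  | cons harc hp =>
    rcases c.child harc with hy | hy
    · subst hy
      obtain ⟨hv, hl'⟩ := leaf_path c.lxi hp
      subst hv; subst hl'
      exact Or.inr (Or.inl ⟨rfl, rfl⟩)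
    · subst hy
      obtain ⟨hv, hl'⟩ := leaf_path c.lxj hp
      subst hv; subst hl'
      exact Or.inr (Or.inr ⟨rfl, rfl⟩)

lemma m_p_xi (c : CCtx N xi xj p) : N.m p xi = 1 := by
  unfold m
  rw [Nat.card_eq_one_iff_unique]
  refine ⟨⟨fun l1 l2 => ?_⟩, ⟨[xi], IsPath.cons c.axi (IsPath.nil xi)⟩⟩
  have key : ∀ l, N.IsPath p xi l → l = [xi] := by
    intro l hl
    rcases path_from_p c hl with ⟨h1, h2⟩ | ⟨h1, h2⟩ | ⟨h1, h2⟩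
    · exact absurd h1 c.nexip
    · exact h2
    · exact absurd h1 c.nexixj
  exact Subtype.ext ((key _ l1.2).trans (key _ l2.2).symm)

lemma m_p_xj (c : CCtx N xi xj p) : N.m p xj = 1 := by
  unfold m
  rw [Nat.card_eq_one_iff_unique]
  refine ⟨⟨fun l1 l2 => ?_⟩, ⟨[xj], IsPath.cons c.axj (IsPath.nil xj)⟩⟩
  have key : ∀ l, N.IsPath p xj l → l = [xj] := by
    intro l hl
    rcases path_from_p c hl with ⟨h1, h2⟩ | ⟨h1, h2⟩ | ⟨h1, h2⟩
    · exact absurd h1 c.nexjp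
    · exact absurd h1 (Ne.symm c.nexixj)
    · exact h2
  exact Subtype.ext ((key _ l1.2).trans (key _ l2.2).symm)

lemma m_p_other (c : CCtx N xi xj p) {v : N.V} (h1 : v ≠ p) (h2 : v ≠ xi) (h3 : v ≠ xj) :
    N.m p v = 0 := by
  unfold m
  rw [Nat.card_eq_zero]
  left
  refine ⟨fun l => ?_⟩
  rcases path_from_p c l.2 with ⟨hv, -⟩ | ⟨hv, -⟩ | ⟨hv, -⟩
  · exact h1 hv
  · exact h2 hv
  · exact h3 hv

open Classical in
lemma leaf_filter (hN : N.Valid) {u : N.V} (hu : N.isLeaf u) {k : Fin (n + 1)}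
    (hk : N.label u = (k : ℕ)) :
    Finset.univ.filter (fun v => N.isLeaf v ∧ N.label v = (k : ℕ)) = {u} := by
  ext v
  simp only [Finset.mem_filter, Finset.mem_univ, true_and, Finset.mem_singleton]
  constructor
  · rintro ⟨h1, h2⟩
    exact hN.2.2.2.2.1 v u h1 hu (by rw [h2, hk])
  · rintro rfl
    exact ⟨hu, hk⟩

end Aux

/-- for a cherry `(i,j)`, every node of `N` other than the leaf
`xi` and the common parent `p` survives in `N^{(i,j)}` with the same μ-vector
except that the `i`-th coordinate becomes `0`; hence `𝛍(N^{(i,j)}) = 𝛍(N)^{(i,j)}`. -/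
theorem stmt10 {n : ℕ} (N : BPN n) (hN : N.Valid) (i j : Fin (n + 1))
    (xi xj p : N.V) (h : N.IsCherry i j xi xj p) :
    (∀ (u : N.V) (hu : u ≠ xi ∧ u ≠ p),
      (∀ k : Fin (n + 1), k ≠ i → (N.cherryReduce xi xj p).mu ⟨u, hu⟩ k = N.mu u k) ∧
      (N.cherryReduce xi xj p).mu ⟨u, hu⟩ i = 0) ∧
    (N.cherryReduce xi xj p).muRep = cherryRed i j N.muRep := by
  classical
  have c : CCtx N xi xj p := cherry_ctx hN h
  obtain ⟨lxi, hlxi, lxj, hlxj, hne, axi, axj⟩ := h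
  have hinj := hN.2.2.2.2.1
  have hi1 : 1 ≤ N.label xi := (hN.2.2.2.1 xi lxi).2.1
  have hi0 : i ≠ 0 := by
    intro he; rw [he] at hlxi; simp at hlxi; omega
  have hj1 : 1 ≤ N.label xj := (hN.2.2.2.1 xj lxj).2.1
  have hj0 : j ≠ 0 := by
    intro he; rw [he] at hlxj; simp at hlxj; omega
  have hij : i ≠ j := by
    intro he
    exact c.nexixj (hinj xi xj lxi lxj (by rw [hlxi, hlxj, he]))
  -- Part 1
  have hmu : ∀ (u : N.V) (hu : u ≠ xi ∧ u ≠ p),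
      (∀ k : Fin (n + 1), k ≠ i → (N.cherryReduce xi xj p).mu ⟨u, hu⟩ k = N.mu u k) ∧
      (N.cherryReduce xi xj p).mu ⟨u, hu⟩ i = 0 := by
    intro u hu
    constructor
    · intro k hk
      unfold mu
      by_cases hk0 : k = 0
      · subst hk0
        rw [if_pos rfl, if_pos rfl]
        refine Finset.sum_bij' (fun v _ => v.1) (fun v hv => ⟨v, ?_, ?_⟩)
          ?_ ?_ ?_ ?_ ?_
        · intro he
          have hr := (Finset.mem_filter.mp hv).2
          rw [he] at hr
          have h1 := hr.1
          have h2 := lxi.1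
          omega
        · intro he
          have hr := (Finset.mem_filter.mp hv).2
          rw [he] at hr
          have h1 := hr.2
          have h2 := c.tp.2
          omega
        · intro v hv
          exact Finset.mem_filter.mpr ⟨Finset.mem_univ _,
            (isRetic_red c v).mp (Finset.mem_filter.mp hv).2⟩
        · intro v hv
          exact Finset.mem_filter.mpr ⟨Finset.mem_univ _,
            (isRetic_red c _).mpr (Finset.mem_filter.mp hv).2⟩
        · intro v hv
          exact Subtype.ext rfl
        · intro v hv
          rfl
        · intro v hv
          exact m_red c ⟨u, hu⟩ v
      · rw [if_neg hk0, if_neg hk0]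
        refine Finset.sum_bij' (fun v _ => v.1) (fun v hv => ⟨v, ?_, ?_⟩)
          ?_ ?_ ?_ ?_ ?_
        · intro he
          have hr := (Finset.mem_filter.mp hv).2
          rw [he] at hr
          have : (i : ℕ) = (k : ℕ) := by rw [← hlxi, hr.2]
          exact hk (Fin.val_injective this).symm
        · intro he
          have hr := (Finset.mem_filter.mp hv).2
          rw [he] at hr
          have h1 := hr.1.2
          have h2 := c.tp.2
          omega
        · intro v hv
          have hr := (Finset.mem_filter.mp hv).2
          exact Finset.mem_filter.mpr ⟨Finset.mem_univ _,
            (isLeaf_red c v).mp hr.1, hr.2⟩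
        · intro v hv
          have hr := (Finset.mem_filter.mp hv).2
          exact Finset.mem_filter.mpr ⟨Finset.mem_univ _,
            (isLeaf_red c _).mpr hr.1, hr.2⟩
        · intro v hv
          exact Subtype.ext rfl
        · intro v hv
          rfl
        · intro v hv
          exact m_red c ⟨u, hu⟩ v
    · unfold mu
      rw [if_neg hi0]
      apply Finset.sum_eq_zero
      intro v hv
      exfalso
      have hr := (Finset.mem_filter.mp hv).2
      have hl : N.isLeaf v.1 := (isLeaf_red c v).mp hr.1
      have : v.1 = xi := hinj v.1 xi hl lxi (by rw [hlxi]; exact hr.2)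
      exact v.2.1 this
  refine ⟨hmu, ?_⟩
  -- μ-vectors of xi and p
  have hmuxi : N.mu xi = delta {i} := by
    funext k
    unfold mu delta
    by_cases hk0 : k = 0
    · subst hk0
      rw [if_pos rfl, if_neg (by simp; exact fun he => hi0 he.symm)]
      apply Finset.sum_eq_zero
      intro v hv
      have hr := (Finset.mem_filter.mp hv).2
      apply m_leaf_ne lxi
      intro he
      rw [he] at hr
      have h1 := hr.1
      have h2 := lxi.1
      omega
    · rw [if_neg hk0]
      by_cases hki : k = i
      · subst hki
        rw [if_pos (Finset.mem_singleton_self _)]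
        rw [leaf_filter hN lxi hlxi, Finset.sum_singleton]
        exact m_leaf_self lxi
      · rw [if_neg (by simp; exact hki)]
        apply Finset.sum_eq_zero
        intro v hv
        have hr := (Finset.mem_filter.mp hv).2
        apply m_leaf_ne lxi
        intro he
        rw [he] at hr
        have : (i : ℕ) = (k : ℕ) := by rw [← hlxi, hr.2]
        exact hki (Fin.val_injective this).symm
  have hmup : N.mu p = delta {i, j} := by
    funext k
    unfold mu delta
    by_cases hk0 : k = 0
    · subst hk0
      rw [if_pos rfl, if_neg (by
        simp only [Finset.mem_insert, Finset.mem_singleton]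
        rintro (he | he)
        · exact hi0 he.symm
        · exact hj0 he.symm)]
      apply Finset.sum_eq_zero
      intro v hv
      have hr := (Finset.mem_filter.mp hv).2
      have h2 := c.tp.2
      have h3 := lxi.1
      have h4 := lxj.1
      apply m_p_other c
      · intro he; rw [he] at hr; have := hr.2; omega
      · intro he; rw [he] at hr; have := hr.1; omega
      · intro he; rw [he] at hr; have := hr.1; omega
    · rw [if_neg hk0]
      by_cases hki : k = i
      · subst hki
        rw [if_pos (Finset.mem_insert_self _ _)]
        rw [leaf_filter hN lxi hlxi, Finset.sum_singleton]
        exact m_p_xi c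
      · by_cases hkj : k = j
        · subst hkj
          rw [if_pos (by simp)]
          rw [leaf_filter hN lxj hlxj, Finset.sum_singleton]
          exact m_p_xj c
        · rw [if_neg (by
            simp only [Finset.mem_insert, Finset.mem_singleton]
            rintro (he | he)
            · exact hki he
            · exact hkj he)]
          apply Finset.sum_eq_zero
          intro v hv
          have hr := (Finset.mem_filter.mp hv).2
          apply m_p_other c
          · intro he; rw [he] at hr
            have h1 := hr.1.2
            have h2 := c.tp.2
            omega
          · intro he; rw [he] at hr
            have : (i : ℕ) = (k : ℕ) := by rw [← hlxi, hr.2]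
            exact hki (Fin.val_injective this).symm
          · intro he; rw [he] at hr
            have : (j : ℕ) = (k : ℕ) := by rw [← hlxj, hr.2]
            exact hkj (Fin.val_injective this).symm
  -- assemble the multisets
  have hxiv : xi ∈ (Finset.univ.filter (fun u => N.isVT u)).val :=
    Finset.mem_filter.mpr ⟨Finset.mem_univ _, Or.inl lxi⟩
  have hpv : p ∈ ((Finset.univ.filter (fun u => N.isVT u)).val.erase xi) := by
    rw [Multiset.mem_erase_of_ne (Ne.symm c.nexip)]
    exact Finset.mem_filter.mpr ⟨Finset.mem_univ _, Or.inr c.tp⟩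
  have hrep : N.muRep = delta {i} ::ₘ delta {i, j} ::ₘ
      (((Finset.univ.filter (fun u => N.isVT u)).val.erase xi).erase p).map N.mu := by
    unfold muRep
    conv_lhs => rw [← Multiset.cons_erase hxiv, ← Multiset.cons_erase hpv]
    rw [Multiset.map_cons, Multiset.map_cons, hmuxi, hmup]
  have hmu' : ∀ v : (N.cherryReduce xi xj p).V,
      (N.cherryReduce xi xj p).mu v = fun k => if k = i then 0 else N.mu v.1 k := by
    intro v
    funext k
    by_cases hki : k = i
    · rw [if_pos hki, hki]
      exact (hmu v.1 v.2).2
    · rw [if_neg hki]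
      exact (hmu v.1 v.2).1 k hki
  have hval : (Finset.univ.filter (fun v => (N.cherryReduce xi xj p).isVT v)).val.map
      Subtype.val = ((Finset.univ.filter (fun u => N.isVT u)).val.erase xi).erase p := by
    have hnd1 : ((Finset.univ.filter (fun v => (N.cherryReduce xi xj p).isVT v)).val.map
        Subtype.val).Nodup :=
      (Finset.univ.filter (fun v => (N.cherryReduce xi xj p).isVT v)).nodup.map
        Subtype.val_injective
    have hnd0 : ((Finset.univ.filter (fun u => N.isVT u)).val.erase xi).Nodup :=
      (Finset.univ.filter (fun u => N.isVT u)).nodup.erase xi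
    have hnd2 : (((Finset.univ.filter (fun u => N.isVT u)).val.erase xi).erase p).Nodup :=
      hnd0.erase p
    rw [Multiset.Nodup.ext hnd1 hnd2]
    intro a
    constructor
    · intro ha
      obtain ⟨v, hv, rfl⟩ := Multiset.mem_map.mp ha
      rw [Multiset.Nodup.mem_erase_iff hnd0]
      refine ⟨v.2.2, ?_⟩
      rw [Multiset.Nodup.mem_erase_iff (Finset.univ.filter (fun u => N.isVT u)).nodup]
      refine ⟨v.2.1, ?_⟩
      have hv' := (Finset.mem_filter (α := (N.cherryReduce xi xj p).V)).mp hv |>.2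
      exact Finset.mem_filter.mpr ⟨Finset.mem_univ _, (isVT_red c v).mp hv'⟩
    · intro ha
      rw [Multiset.Nodup.mem_erase_iff hnd0] at ha
      obtain ⟨hap, ha⟩ := ha
      rw [Multiset.Nodup.mem_erase_iff (Finset.univ.filter (fun u => N.isVT u)).nodup] at ha
      obtain ⟨haxi, ha⟩ := ha
      refine Multiset.mem_map.mpr ⟨⟨a, haxi, hap⟩, ?_, rfl⟩
      exact (Finset.mem_filter (α := (N.cherryReduce xi xj p).V)).mpr ⟨Finset.mem_univ _,
        (isVT_red c _).mpr (Finset.mem_filter.mp ha).2⟩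
  unfold cherryRed
  rw [hrep, Multiset.erase_cons_head, Multiset.erase_cons_head]
  unfold muRep
  rw [Multiset.map_congr rfl (fun v _ => hmu' v)]
  rw [Multiset.map_map, ← hval]
  erw [Multiset.map_map]
  rfl

end BPN
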